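/- Let r ≥ 1 and let b : ℝ^r → ℝ^r be continuously differentiable with M := sup_x ‖Db(x)‖ < ∞ and ⟨v, Db(x) v⟩ ≤ −λ_b ‖v‖^2 for all x, v, for some λ_b > 0. Let Σ be an r × r real matrix, W, W̄ : [0,∞) → ℝ^r continuous with W_0 = W̄_0 = 0, and let X, X̄ satisfy X_t(x) = x + ∫_0^t b(X_s(x)) ds + Σ W_t, X̄_t(x) = x + ∫_0^t b(X̄_s(x)) ds + Σ W̄_t. Define Δ_t(x) := (X_t(x) − X̄_t(x)) − Σ(W_t − W̄_t) = ∫_0^t (b(X_s(x)) − b(X̄_s(x))) ds. Then for every δ with 0 < δ < min(1, λ_b/M^2), setting λ(δ) := (1 − δ)(λ_b − δ M^2) and c(δ) := (2/δ)(1/4 + λ(δ)) ‖Σ‖^2, one has for all t ≥ 0 and all x: ‖Δ_t(x)‖^2 ≤ c(δ) ∫_0^t e^{−2λ(δ)(t−s)} ‖W_s − W̄_s‖^2 ds. -/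

import Mathlib

open scoped RealInnerProductSpace
open MeasureTheory intervalIntegral

lemma aux_inner_est {E : Type*} [NormedAddCommGroup E] [InnerProductSpace ℝ E] [CompleteSpace E]
    (b : E → E) (hb : ContDiff ℝ 1 b) (lamb M : ℝ)
    (hM : ∀ x, ‖fderiv ℝ b x‖ ≤ M)
    (hlog : ∀ x v, ⟪v, fderiv ℝ b x v⟫ ≤ -lamb * ‖v‖^2)
    (y z v w : E) (hZ : y - z = v + w) :
    ⟪v, b y - b z⟫ ≤ -lamb * ‖v‖^2 + M * (‖v‖ * ‖w‖) := by
  have hbd := hb.differentiable one_ne_zero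
  set c : ℝ → E := fun θ => z + θ • (y - z) with hc
  have hcd : ∀ θ : ℝ, HasDerivAt c (y - z) θ := fun θ => by
    have h := ((hasDerivAt_id θ).smul_const (y - z)).const_add z
    rw [one_smul] at h
    exact h
  have hder : ∀ θ : ℝ, HasDerivAt (fun θ => b (c θ)) (fderiv ℝ b (c θ) (y - z)) θ :=
    fun θ => (hbd (c θ)).hasFDerivAt.comp_hasDerivAt θ (hcd θ)
  have hccont : Continuous c := by
    apply Continuous.add continuous_const
    exact continuous_id.smul continuous_const
  have hcont : Continuous fun θ => fderiv ℝ b (c θ) (y - z) :=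
    Continuous.clm_apply ((hb.continuous_fderiv one_ne_zero).comp hccont) continuous_const
  have hint : IntervalIntegrable (fun θ => fderiv ℝ b (c θ) (y - z)) MeasureTheory.volume 0 1 :=
    hcont.intervalIntegrable 0 1
  have heq : b y - b z = ∫ θ in (0:ℝ)..1, fderiv ℝ b (c θ) (y - z) := by
    rw [intervalIntegral.integral_eq_sub_of_hasDerivAt (fun θ _ => hder θ) hint]
    simp [hc]
  have heq2 : ⟪v, b y - b z⟫ = ∫ θ in (0:ℝ)..1, ⟪v, fderiv ℝ b (c θ) (y - z)⟫ := by
    rw [heq]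
    exact ((innerSL ℝ v).intervalIntegral_comp_comm hint).symm
  rw [heq2]
  have hM0 : 0 ≤ M := le_trans (norm_nonneg _) (hM z)
  have hptwise : ∀ θ : ℝ, ⟪v, fderiv ℝ b (c θ) (y - z)⟫ ≤ -lamb * ‖v‖^2 + M * (‖v‖ * ‖w‖) := by
    intro θ
    rw [hZ, map_add, inner_add_right]
    refine add_le_add (hlog _ v) ?_
    calc ⟪v, fderiv ℝ b (c θ) w⟫ ≤ ‖v‖ * ‖fderiv ℝ b (c θ) w‖ := real_inner_le_norm _ _
      _ ≤ ‖v‖ * (M * ‖w‖) := by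
          refine mul_le_mul_of_nonneg_left ?_ (norm_nonneg v)
          exact le_trans ((fderiv ℝ b (c θ)).le_opNorm w)
            (mul_le_mul_of_nonneg_right (hM _) (norm_nonneg w))
      _ = M * (‖v‖ * ‖w‖) := by ring
  calc (∫ θ in (0:ℝ)..1, ⟪v, fderiv ℝ b (c θ) (y - z)⟫)
      ≤ ∫ _ in (0:ℝ)..1, (-lamb * ‖v‖^2 + M * (‖v‖ * ‖w‖)) := by
        apply intervalIntegral.integral_mono_on zero_le_one ?_ intervalIntegrable_const
          (fun θ _ => hptwise θ)
        exact ((Continuous.inner continuous_const hcont).intervalIntegrable 0 1)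
    _ = -lamb * ‖v‖^2 + M * (‖v‖ * ‖w‖) := by simp

lemma young_aux (a w' κ B M : ℝ) (ha : 0 ≤ a) (hw : 0 ≤ w') (hκ : 0 < κ)
    (hBκ : M^2 ≤ B*κ) : 2*M*(a*w') ≤ κ*a^2 + B*w'^2 := by
  nlinarith [sq_nonneg (κ*a - M*w'), mul_nonneg (sub_nonneg.mpr hBκ) (sq_nonneg w'), hκ.le]

set_option maxHeartbeats 2000000 in
theorem stmt_6 {r : ℕ} (hr : 1 ≤ r) (lamb : ℝ) (hlamb : 0 < lamb)
    (b : EuclideanSpace ℝ (Fin r) → EuclideanSpace ℝ (Fin r)) (hb : ContDiff ℝ 1 b)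
    (M : ℝ) (hM : ∀ x, ‖fderiv ℝ b x‖ ≤ M)
    (hlog : ∀ x v, ⟪v, fderiv ℝ b x v⟫ ≤ -lamb * ‖v‖^2)
    (Sig : EuclideanSpace ℝ (Fin r) →L[ℝ] EuclideanSpace ℝ (Fin r))
    (W Wbar : ℝ → EuclideanSpace ℝ (Fin r))
    (hW : Continuous W) (hWbar : Continuous Wbar) (hW0 : W 0 = 0) (hWbar0 : Wbar 0 = 0)
    (X Xbar : ℝ → EuclideanSpace ℝ (Fin r) → EuclideanSpace ℝ (Fin r))
    (hXc : ∀ x, Continuous fun t => X t x) (hXbarc : ∀ x, Continuous fun t => Xbar t x)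
    (hX : ∀ x, ∀ t ≥ (0:ℝ), X t x = x + (∫ s in (0:ℝ)..t, b (X s x)) + Sig (W t))
    (hXbar : ∀ x, ∀ t ≥ (0:ℝ),
        Xbar t x = x + (∫ s in (0:ℝ)..t, b (Xbar s x)) + Sig (Wbar t)) :
    ∀ δ : ℝ, 0 < δ → δ < min 1 (lamb / M^2) →
      ∀ t ≥ (0:ℝ), ∀ x,
        ‖(X t x - Xbar t x) - Sig (W t - Wbar t)‖^2
          ≤ (2/δ) * (1/4 + (1-δ)*(lamb - δ*M^2)) * ‖Sig‖^2
              * ∫ s in (0:ℝ)..t,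
                  Real.exp (-(2*((1-δ)*(lamb - δ*M^2))*(t-s))) * ‖W s - Wbar s‖^2 := by
  intro δ hδ hδlt t ht x
  have hδ0 : δ ≠ 0 := ne_of_gt hδ
  have hδ1 : δ < 1 := lt_of_lt_of_le hδlt (min_le_left _ _)
  have hδ2 : δ < lamb / M^2 := lt_of_lt_of_le hδlt (min_le_right _ _)
  -- M is positive
  have hMpos : 0 < M := by
    set v₀ : EuclideanSpace ℝ (Fin r) := EuclideanSpace.single ⟨0, hr⟩ (1:ℝ) with hv₀
    have hnv : ‖v₀‖ = 1 := by simp [hv₀, EuclideanSpace.norm_single]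
    have h1 := hlog 0 v₀
    have h2 : -(⟪v₀, fderiv ℝ b 0 v₀⟫) ≤ ‖v₀‖ * ‖fderiv ℝ b 0 v₀‖ := by
      calc -(⟪v₀, fderiv ℝ b 0 v₀⟫) ≤ |⟪v₀, fderiv ℝ b 0 v₀⟫| := neg_le_abs _
        _ ≤ ‖v₀‖ * ‖fderiv ℝ b 0 v₀‖ := abs_real_inner_le_norm _ _
    have h3 : ‖fderiv ℝ b 0 v₀‖ ≤ M * ‖v₀‖ :=
      le_trans ((fderiv ℝ b 0).le_opNorm v₀) (mul_le_mul_of_nonneg_right (hM 0) (norm_nonneg _))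
    rw [hnv] at h1 h2 h3
    nlinarith
  have hMδ : δ * M^2 < lamb := (lt_div_iff₀ (pow_pos hMpos 2)).mp hδ2
  set lam : ℝ := (1-δ)*(lamb - δ*M^2) with hlam_def
  have hlam : 0 < lam := mul_pos (by linarith) (by linarith)
  clear_value lam
  set C : ℝ := (2/δ) * (1/4 + lam) * ‖Sig‖^2 with hC_def
  have hC0 : 0 ≤ C := by
    rw [hC_def]
    have : (0:ℝ) ≤ 2/δ := by positivity
    have : (0:ℝ) ≤ 1/4 + lam := by linarith
    positivity
  clear_value C
  set g : ℝ → EuclideanSpace ℝ (Fin r) := fun s => b (X s x) - b (Xbar s x) with hg_def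
  have hgc : Continuous g := (hb.continuous.comp (hXc x)).sub (hb.continuous.comp (hXbarc x))
  set F : ℝ → EuclideanSpace ℝ (Fin r) := fun s => ∫ u in (0:ℝ)..s, g u with hF_def
  have hF : ∀ s : ℝ, HasDerivAt F (g s) s := fun s =>
    intervalIntegral.integral_hasDerivAt_right (hgc.intervalIntegrable 0 s)
      (hgc.stronglyMeasurableAtFilter _ _) hgc.continuousAt
  -- the decomposition X - Xbar = F + Sig ΔW for s ≥ 0
  have hFD : ∀ s : ℝ, 0 ≤ s → X s x - Xbar s x = F s + Sig (W s - Wbar s) := by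
    intro s hs
    have h1 := hX x s hs
    have h2 := hXbar x s hs
    have hsub : F s = (∫ u in (0:ℝ)..s, b (X u x)) - ∫ u in (0:ℝ)..s, b (Xbar u x) := by
      rw [hF_def]
      exact intervalIntegral.integral_sub ((hb.continuous.comp (hXc x)).intervalIntegrable 0 s)
        ((hb.continuous.comp (hXbarc x)).intervalIntegrable 0 s)
    rw [h1, h2, hsub, map_sub]
    abel
  -- key differential estimate
  have hkey : ∀ s : ℝ, 0 ≤ s →
      2 * ⟪F s, g s⟫ ≤ -(2*lam) * ‖F s‖^2 + C * ‖W s - Wbar s‖^2 := by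
    intro s hs
    have hinner := aux_inner_est b hb lamb M hM hlog (X s x) (Xbar s x) (F s)
      (Sig (W s - Wbar s)) (hFD s hs)
    have hgs : b (X s x) - b (Xbar s x) = g s := rfl
    rw [hgs] at hinner
    set a := ‖F s‖ with ha_def
    set w' := ‖Sig (W s - Wbar s)‖ with hw_def
    set d := ‖W s - Wbar s‖ with hd_def
    have hwle : w' ≤ ‖Sig‖ * d := Sig.le_opNorm _
    set κ : ℝ := 2*δ*(lamb + (1-δ)*M^2) with hκ_def
    have hP : (0:ℝ) < lamb + (1-δ)*M^2 := by nlinarith [sq_nonneg M]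
    have hκpos : 0 < κ := by rw [hκ_def]; positivity
    have hC1 : M^2 ≤ (2/δ) * (1/4 + lam) * κ := by
      have h : (2/δ) * (1/4 + lam) * κ = (1 + 4*lam) * (lamb + (1-δ)*M^2) := by
        rw [hκ_def]; field_simp; ring
      rw [h]
      nlinarith [mul_pos hlam hP]
    have hyoung : 2*M*(a*w') ≤ κ*a^2 + (2/δ)*(1/4+lam)*w'^2 :=
      young_aux a w' κ ((2/δ)*(1/4+lam)) M (norm_nonneg _) (norm_nonneg _) hκpos
        (by linarith [hC1])
    have hwsq : (2/δ)*(1/4+lam)*w'^2 ≤ C * d^2 := by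
      have hsq : w'^2 ≤ (‖Sig‖*d)^2 := pow_le_pow_left₀ (norm_nonneg _) hwle 2
      have hB : (0:ℝ) ≤ (2/δ)*(1/4+lam) := by positivity
      calc (2/δ)*(1/4+lam)*w'^2 ≤ (2/δ)*(1/4+lam)*(‖Sig‖*d)^2 :=
            mul_le_mul_of_nonneg_left hsq hB
        _ = C * d^2 := by rw [hC_def]; ring
    calc 2 * ⟪F s, g s⟫ ≤ 2*(-lamb*a^2 + M*(a*w')) := by linarith [hinner]
      _ = -(2*lamb)*a^2 + 2*M*(a*w') := by ring
      _ ≤ -(2*lamb)*a^2 + (κ*a^2 + (2/δ)*(1/4+lam)*w'^2) := by linarith [hyoung]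
      _ = -(2*lam)*a^2 + (2/δ)*(1/4+lam)*w'^2 := by rw [hκ_def, hlam_def]; ring
      _ ≤ -(2*lam)*a^2 + C*d^2 := by linarith [hwsq]
  -- Gronwall via monotonicity
  set E2 : ℝ → ℝ := fun s => Real.exp (2*lam*s) with hE2_def
  have hE2d : ∀ s : ℝ, HasDerivAt E2 (2*lam * E2 s) s := by
    intro s
    have h := ((hasDerivAt_id s).const_mul (2*lam)).exp
    simpa [hE2_def, mul_comm] using h
  set ψ : ℝ → ℝ := fun s => E2 s * ⟪F s, F s⟫ with hψ_def
  have hψd : ∀ s : ℝ, HasDerivAt ψ (2*lam * E2 s * ⟪F s, F s⟫ + E2 s * (2 * ⟪F s, g s⟫)) s := by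
    intro s
    have hin : HasDerivAt (fun u => ⟪F u, F u⟫) (⟪F s, g s⟫ + ⟪g s, F s⟫) s :=
      HasDerivAt.inner ℝ (hF s) (hF s)
    have h := (hE2d s).mul hin
    refine HasDerivAt.congr_deriv h ?_
    rw [real_inner_comm (g s) (F s)]
    ring
  set q : ℝ → ℝ := fun u => E2 u * ‖W u - Wbar u‖^2 with hq_def
  have hqc : Continuous q := by
    apply Continuous.mul
    · exact Real.continuous_exp.comp (continuous_const.mul continuous_id)
    · exact (hW.sub hWbar).norm.pow 2
  set G : ℝ → ℝ := fun s => C * ∫ u in (0:ℝ)..s, q u with hG_def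
  have hGd : ∀ s : ℝ, HasDerivAt G (C * q s) s := fun s =>
    (intervalIntegral.integral_hasDerivAt_right (hqc.intervalIntegrable 0 s)
      (hqc.stronglyMeasurableAtFilter _ _) hqc.continuousAt).const_mul C
  set H : ℝ → ℝ := fun s => G s - ψ s with hH_def
  have hHd : ∀ s : ℝ,
      HasDerivAt H (C * q s - (2*lam * E2 s * ⟪F s, F s⟫ + E2 s * (2 * ⟪F s, g s⟫))) s :=
    fun s => (hGd s).sub (hψd s)
  have hHdiff : Differentiable ℝ H := fun s => (hHd s).differentiableAt
  have hmono : MonotoneOn H (Set.Icc 0 t) := by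
    apply monotoneOn_of_deriv_nonneg (convex_Icc 0 t) hHdiff.continuous.continuousOn
      (fun s _ => (hHdiff s).differentiableWithinAt)
    intro s hs
    rw [interior_Icc] at hs
    rw [(hHd s).deriv]
    have hk := hkey s hs.1.le
    have hE2pos : (0:ℝ) < E2 s := Real.exp_pos _
    have hFF : ⟪F s, F s⟫ = ‖F s‖^2 := real_inner_self_eq_norm_sq (F s)
    have hq1 : q s = E2 s * ‖W s - Wbar s‖^2 := rfl
    rw [hFF, hq1]
    have h2 := mul_le_mul_of_nonneg_left hk hE2pos.le
    nlinarith [h2]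
  have hF0 : F 0 = 0 := intervalIntegral.integral_same
  have hH0 : H 0 = 0 := by
    simp [hH_def, hG_def, hψ_def, hF0]
  have hψG : ψ t ≤ G t := by
    have hHt : H 0 ≤ H t :=
      hmono (Set.left_mem_Icc.mpr ht) (Set.mem_Icc.mpr ⟨ht, le_refl t⟩) ht
    rw [hH0] at hHt
    have : H t = G t - ψ t := rfl
    linarith [hHt, this.symm.le, this.le]
  have hLHS : ‖(X t x - Xbar t x) - Sig (W t - Wbar t)‖^2 = ‖F t‖^2 := by
    rw [hFD t ht, add_sub_cancel_right]
  have hRHS : C * (∫ s in (0:ℝ)..t, Real.exp (-(2*lam*(t-s))) * ‖W s - Wbar s‖^2)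
      = Real.exp (-(2*lam*t)) * G t := by
    have hpt : ∀ u : ℝ, Real.exp (-(2*lam*(t-u))) * ‖W u - Wbar u‖^2
        = Real.exp (-(2*lam*t)) * q u := by
      intro u
      have hqu : q u = Real.exp (2*lam*u) * ‖W u - Wbar u‖^2 := rfl
      rw [hqu, show -(2*lam*(t-u)) = -(2*lam*t) + 2*lam*u by ring, Real.exp_add, mul_assoc]
    simp_rw [hpt]
    rw [intervalIntegral.integral_const_mul, hG_def]
    ring
  calc ‖(X t x - Xbar t x) - Sig (W t - Wbar t)‖^2 = ‖F t‖^2 := hLHS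
    _ = Real.exp (-(2*lam*t)) * ψ t := by
        have hψt : ψ t = Real.exp (2*lam*t) * ⟪F t, F t⟫ := rfl
        have hFF : ⟪F t, F t⟫ = ‖F t‖^2 := real_inner_self_eq_norm_sq (F t)
        have h1 : Real.exp (-(2*lam*t)) * Real.exp (2*lam*t) = 1 := by
          rw [← Real.exp_add]; simp
        rw [hψt, hFF, ← mul_assoc, h1, one_mul]
    _ ≤ Real.exp (-(2*lam*t)) * G t := mul_le_mul_of_nonneg_left hψG (Real.exp_nonneg _)
    _ = C * (∫ s in (0:ℝ)..t, Real.exp (-(2*lam*(t-s))) * ‖W s - Wbar s‖^2) := hRHS.symm
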